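/- Let p > 1, let g be a positive C² function on Ω ⊆ ℝ^N with g^α p-harmonic for some α ≠ 0, and let v ∈ C²(ℝ) with v'(g(ξ)) ≠ 0 on Ω. Then for u := v ∘ g, Δ_p u = (p-1)|∇g|^p |v'(g)|^{p-2} [ v''(g) + ((1-α)/g) v'(g) ] on Ω. -/

import Mathlib

open Real

/-- The Euclidean `p`-Laplacian `div(|∇g|^{p-2} ∇g)` at a point. -/
noncomputable def pLaplacian {N : ℕ} (p : ℝ) (g : EuclideanSpace ℝ (Fin N) → ℝ)
    (ξ : EuclideanSpace ℝ (Fin N)) : ℝ :=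
  ∑ i, fderiv ℝ (fun x => ‖gradient g x‖ ^ (p - 2) * gradient g x i) ξ
    (EuclideanSpace.single i 1)

noncomputable def toDualSymmCLM (N : ℕ) :
    (EuclideanSpace ℝ (Fin N) →L[ℝ] ℝ) →L[ℝ] EuclideanSpace ℝ (Fin N) where
  toFun := fun L => (InnerProductSpace.toDual ℝ _).symm L
  map_add' := fun x y => map_add _ x y
  map_smul' := fun c x => by
    simpa using (InnerProductSpace.toDual ℝ (EuclideanSpace ℝ (Fin N))).symm.map_smulₛₗ c x
  cont := (InnerProductSpace.toDual ℝ _).symm.continuous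

lemma phi_hasDerivAt (p : ℝ) {y : ℝ} (hy : y ≠ 0) :
    HasDerivAt (fun t : ℝ => |t| ^ (p - 2) * t) ((p - 1) * |y| ^ (p - 2)) y := by
  rcases hy.lt_or_gt with hneg | hpos
  · have hy' : (0:ℝ) < -y := by linarith
    have h0 : HasDerivAt (fun s : ℝ => s ^ (p - 1)) ((p - 1) * (-y) ^ (p - 1 - 1)) (-y) :=
      Real.hasDerivAt_rpow_const (Or.inl hy'.ne')
    have h1 : HasDerivAt (fun t : ℝ => (-t) ^ (p - 1)) ((p - 1) * (-y) ^ (p - 1 - 1) * (-1)) y :=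
      h0.comp y (hasDerivAt_neg y)
    have h2 : HasDerivAt (fun t : ℝ => -((-t) ^ (p - 1))) ((p - 1) * (-y) ^ (p - 2)) y := by
      have := h1.neg
      exact this.congr_deriv (by rw [show p - 1 - 1 = p - 2 by ring]; ring)
    have heq : (fun t : ℝ => |t| ^ (p - 2) * t) =ᶠ[nhds y] fun t : ℝ => -((-t) ^ (p - 1)) := by
      filter_upwards [Iio_mem_nhds hneg] with t ht
      have ht' : (0:ℝ) < -t := by simpa using ht
      rw [abs_of_neg (by simpa using ht), show p - 1 = p - 2 + 1 by ring,
        Real.rpow_add_one ht'.ne']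
      ring
    have := h2.congr_of_eventuallyEq heq
    rwa [abs_of_neg hneg]
  · have h0 : HasDerivAt (fun s : ℝ => s ^ (p - 1)) ((p - 1) * y ^ (p - 1 - 1)) y :=
      Real.hasDerivAt_rpow_const (Or.inl hpos.ne')
    have heq : (fun t : ℝ => |t| ^ (p - 2) * t) =ᶠ[nhds y] fun t : ℝ => t ^ (p - 1) := by
      filter_upwards [Ioi_mem_nhds hpos] with t ht
      have ht' : (0:ℝ) < t := ht
      rw [abs_of_pos ht', show p - 1 = p - 2 + 1 by ring, Real.rpow_add_one ht'.ne']
    have := h0.congr_of_eventuallyEq heq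
    rw [abs_of_pos hpos]
    exact this.congr_deriv (by rw [show p - 1 - 1 = p - 2 by ring])

lemma gradient_comp_aux {N : ℕ} {g : EuclideanSpace ℝ (Fin N) → ℝ} {h : ℝ → ℝ}
    {x : EuclideanSpace ℝ (Fin N)}
    (hg : DifferentiableAt ℝ g x) (hh : DifferentiableAt ℝ h (g x)) :
    gradient (fun y => h (g y)) x = deriv h (g x) • gradient g x := by
  have H : HasFDerivAt (fun y => h (g y)) (deriv h (g x) • fderiv ℝ g x) x :=
    (hh.hasDerivAt).comp_hasFDerivAt x hg.hasFDerivAt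
  rw [H.hasGradientAt.gradient]
  simp only [map_smulₛₗ, starRingEnd_apply, star_trivial]
  rfl

lemma chain_rule {N : ℕ} {p : ℝ} (hp : 1 < p)
    {Ω : Set (EuclideanSpace ℝ (Fin N))} (hΩ : IsOpen Ω)
    {g : EuclideanSpace ℝ (Fin N) → ℝ} (hg : ContDiffOn ℝ 2 g Ω)
    {ξ : EuclideanSpace ℝ (Fin N)} (hξ : ξ ∈ Ω)
    (hgrad : gradient g ξ ≠ 0)
    {h : ℝ → ℝ} (hh : ContDiffAt ℝ 2 h (g ξ)) (hh' : deriv h (g ξ) ≠ 0) :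
    pLaplacian p (fun x => h (g x)) ξ =
      |deriv h (g ξ)| ^ (p - 2) * deriv h (g ξ) * pLaplacian p g ξ +
        (p - 1) * |deriv h (g ξ)| ^ (p - 2) * deriv (deriv h) (g ξ) * ‖gradient g ξ‖ ^ p := by
  have hΩξ : Ω ∈ nhds ξ := hΩ.mem_nhds hξ
  have hgC : ContDiffAt ℝ 2 g ξ := hg.contDiffAt hΩξ
  have hfd : ContDiffAt ℝ 1 (fderiv ℝ g) ξ := hgC.fderiv_right (by norm_num)
  have hGC : ContDiffAt ℝ 1 (gradient g) ξ := by
    have : gradient g = fun x => toDualSymmCLM N (fderiv ℝ g x) := rfl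
    rw [this]
    exact ((toDualSymmCLM N).contDiff.contDiffAt).comp ξ hfd
  have hGd : DifferentiableAt ℝ (gradient g) ξ := hGC.differentiableAt one_ne_zero
  have hgd : DifferentiableAt ℝ g ξ := hgC.differentiableAt (by norm_num)
  -- differentiability of the flux of g at ξ
  have hnorm : DifferentiableAt ℝ (fun x => ‖gradient g x‖ ^ (p - 2)) ξ := by
    have h1 : ContDiffAt ℝ 1 (fun x => ‖gradient g x‖) ξ := hGC.norm ℝ hgrad
    have h2 : ContDiffAt ℝ 1 (fun s : ℝ => s ^ (p - 2)) ‖gradient g ξ‖ :=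
      Real.contDiffAt_rpow_const_of_ne (norm_ne_zero_iff.mpr hgrad)
    exact (h2.comp ξ h1).differentiableAt one_ne_zero
  have hFd : ∀ i, DifferentiableAt ℝ
      (fun x => ‖gradient g x‖ ^ (p - 2) * gradient g x i) ξ := by
    intro i
    have hproj : DifferentiableAt ℝ (fun x => gradient g x i) ξ := by
      have : (fun x => gradient g x i)
          = fun x => (EuclideanSpace.proj i : EuclideanSpace ℝ (Fin N) →L[ℝ] ℝ)
            (gradient g x) := by
        ext x; simp
      rw [this]
      exact ((EuclideanSpace.proj i).differentiable.differentiableAt).comp ξ hGd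
    exact hnorm.mul hproj
  set G := gradient g ξ with hGdef
  set Φ : ℝ → ℝ := fun t => |deriv h t| ^ (p - 2) * deriv h t with hΦdef
  -- second derivative of h
  have hderivh : ContDiffAt ℝ 1 (deriv h) (g ξ) := by
    have h1 : ContDiffAt ℝ 1 (fderiv ℝ h) (g ξ) := hh.fderiv_right (by norm_num)
    have := h1.clm_apply (contDiffAt_const (c := (1:ℝ)))
    exact this
  have hd2 : HasDerivAt (deriv h) (deriv (deriv h) (g ξ)) (g ξ) :=
    (hderivh.differentiableAt one_ne_zero).hasDerivAt
  set c : ℝ := (p - 1) * |deriv h (g ξ)| ^ (p - 2) * deriv (deriv h) (g ξ) with hcdef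
  have hΦ : HasDerivAt Φ c (g ξ) := by
    exact (phi_hasDerivAt p hh').comp (g ξ) hd2
  have hΦg : HasFDerivAt (fun x => Φ (g x)) (c • fderiv ℝ g ξ) ξ :=
    hΦ.comp_hasFDerivAt ξ hgd.hasFDerivAt
  -- eventual equality of fluxes
  have hev1 : ∀ᶠ x in nhds ξ, DifferentiableAt ℝ g x := by
    filter_upwards [hΩ.eventually_mem hξ] with x hx
    exact (hg.contDiffAt (hΩ.mem_nhds hx)).differentiableAt (by norm_num)
  have hev2 : ∀ᶠ x in nhds ξ, DifferentiableAt ℝ h (g x) := by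
    have h1 : ∀ᶠ t in nhds (g ξ), ContDiffAt ℝ 2 h t := hh.eventually (by simp)
    filter_upwards [hgC.continuousAt.eventually h1] with x hx
    exact hx.differentiableAt (by norm_num)
  have hkey : ∀ᶠ x in nhds ξ,
      gradient (fun y => h (g y)) x = deriv h (g x) • gradient g x := by
    filter_upwards [hev1, hev2] with x h1 h2
    exact gradient_comp_aux h1 h2
  have hfluxeq : ∀ i : Fin N,
      (fun x => ‖gradient (fun y => h (g y)) x‖ ^ (p - 2) * gradient (fun y => h (g y)) x i)
        =ᶠ[nhds ξ]
      fun x => Φ (g x) * (‖gradient g x‖ ^ (p - 2) * gradient g x i) := by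
    intro i
    filter_upwards [hkey] with x hx
    rw [hx]
    have h1 : ‖deriv h (g x) • gradient g x‖ = |deriv h (g x)| * ‖gradient g x‖ := by
      rw [norm_smul, Real.norm_eq_abs]
    have h2 : (deriv h (g x) • gradient g x) i = deriv h (g x) * gradient g x i := rfl
    rw [h1, h2, Real.mul_rpow (abs_nonneg _) (norm_nonneg _)]
    ring
  -- fderiv of each product
  have hmul : ∀ i : Fin N,
      fderiv ℝ (fun x => Φ (g x) * (‖gradient g x‖ ^ (p - 2) * gradient g x i)) ξ
        (EuclideanSpace.single i 1)
      = Φ (g ξ) * (fderiv ℝ (fun x => ‖gradient g x‖ ^ (p - 2) * gradient g x i) ξ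
          (EuclideanSpace.single i 1))
        + (‖G‖ ^ (p - 2) * G i) * (c * (fderiv ℝ g ξ (EuclideanSpace.single i 1))) := by
    intro i
    have hm : HasFDerivAt
        (fun x => Φ (g x) * (‖gradient g x‖ ^ (p - 2) * gradient g x i))
        (Φ (g ξ) • fderiv ℝ (fun x => ‖gradient g x‖ ^ (p - 2) * gradient g x i) ξ +
          (‖gradient g ξ‖ ^ (p - 2) * gradient g ξ i) • c • fderiv ℝ g ξ) ξ :=
      hΦg.mul (hFd i).hasFDerivAt
    have := hm.fderiv
    rw [this]
    simp [ContinuousLinearMap.smul_apply, smul_eq_mul]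
    try ring
    exact Or.inl rfl
  -- inner product identity
  have hfe : ∀ i : Fin N, fderiv ℝ g ξ (EuclideanSpace.single i 1) = G i := by
    intro i
    have h1 : fderiv ℝ g ξ = (InnerProductSpace.toDual ℝ _) G :=
      hgd.hasGradientAt.hasFDerivAt.fderiv
    rw [h1, InnerProductSpace.toDual_apply_apply, EuclideanSpace.inner_single_right]
    simp
  have hsum2 : ∑ i : Fin N, G i * G i = ‖G‖ ^ (2:ℕ) := by
    rw [EuclideanSpace.norm_sq_eq]
    simp [Real.norm_eq_abs, sq_abs, sq]
  have hGpos : (0:ℝ) < ‖G‖ := norm_pos_iff.mpr hgrad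
  have hnormp : ‖G‖ ^ (p - 2) * ‖G‖ ^ (2:ℕ) = ‖G‖ ^ p := by
    rw [show ((‖G‖:ℝ) ^ (2:ℕ)) = ‖G‖ ^ ((2:ℕ):ℝ) from (Real.rpow_natCast _ 2).symm,
      ← Real.rpow_add hGpos]
    norm_num
  -- assemble
  rw [pLaplacian]
  have hrw : ∀ i : Fin N,
      fderiv ℝ (fun x => ‖gradient (fun y => h (g y)) x‖ ^ (p - 2)
          * gradient (fun y => h (g y)) x i) ξ (EuclideanSpace.single i 1)
      = Φ (g ξ) * (fderiv ℝ (fun x => ‖gradient g x‖ ^ (p - 2) * gradient g x i) ξ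
          (EuclideanSpace.single i 1))
        + (‖G‖ ^ (p - 2) * G i) * (c * G i) := by
    intro i
    rw [(hfluxeq i).fderiv_eq, hmul i, hfe i]
  calc ∑ i, fderiv ℝ (fun x => ‖gradient (fun x => h (g x)) x‖ ^ (p - 2)
          * gradient (fun x => h (g x)) x i) ξ (EuclideanSpace.single i 1)
      = ∑ i : Fin N, (Φ (g ξ) * (fderiv ℝ (fun x => ‖gradient g x‖ ^ (p - 2)
          * gradient g x i) ξ (EuclideanSpace.single i 1))
        + (‖G‖ ^ (p - 2) * G i) * (c * G i)) := by
        exact Finset.sum_congr rfl fun i _ => hrw i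
    _ = Φ (g ξ) * pLaplacian p g ξ + c * (‖G‖ ^ (p - 2) * ∑ i : Fin N, G i * G i) := by
        rw [Finset.sum_add_distrib, ← Finset.mul_sum, pLaplacian]
        congr 1
        rw [Finset.mul_sum, Finset.mul_sum]
        exact Finset.sum_congr rfl fun i _ => by ring
    _ = Φ (g ξ) * pLaplacian p g ξ + c * ‖G‖ ^ p := by rw [hsum2, ← hnormp]; try ring
    _ = _ := by rw [hΦdef, hcdef]; try ring

theorem stmt11 (N : ℕ) (p α : ℝ) (hp : 1 < p) (hα : α ≠ 0)
    (Ω : Set (EuclideanSpace ℝ (Fin N))) (hΩ : IsOpen Ω)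
    (g : EuclideanSpace ℝ (Fin N) → ℝ) (hg : ContDiffOn ℝ 2 g Ω)
    (hgpos : ∀ ξ ∈ Ω, 0 < g ξ) (hgrad : ∀ ξ ∈ Ω, gradient g ξ ≠ 0)
    (hharm : ∀ ξ ∈ Ω, pLaplacian p (fun x => g x ^ α) ξ = 0)
    (v : ℝ → ℝ) (hv : ContDiff ℝ 2 v) (hv' : ∀ ξ ∈ Ω, deriv v (g ξ) ≠ 0) :
    ∀ ξ ∈ Ω, pLaplacian p (fun x => v (g x)) ξ =
      (p - 1) * ‖gradient g ξ‖ ^ p * |deriv v (g ξ)| ^ (p - 2) *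
        (deriv (deriv v) (g ξ) + (1 - α) / g ξ * deriv v (g ξ)) := by
  intro ξ hξ
  have hgξ : 0 < g ξ := hgpos ξ hξ
  set S := pLaplacian p g ξ with hSdef
  set K := ‖gradient g ξ‖ ^ p with hKdef
  -- step 1: use p-harmonicity of g^α to compute S
  have hhα : ContDiffAt ℝ 2 (fun t : ℝ => t ^ α) (g ξ) :=
    Real.contDiffAt_rpow_const_of_ne hgξ.ne'
  have hdα : deriv (fun t : ℝ => t ^ α) (g ξ) = α * g ξ ^ (α - 1) :=
    Real.deriv_rpow_const (g ξ) α
  have hdα' : deriv (deriv (fun t : ℝ => t ^ α)) (g ξ) = α * ((α - 1) * g ξ ^ (α - 2)) := by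
    have hev : deriv (fun t : ℝ => t ^ α) =ᶠ[nhds (g ξ)] fun t => α * t ^ (α - 1) := by
      filter_upwards [Ioi_mem_nhds hgξ] with t ht
      exact Real.deriv_rpow_const t α
    rw [hev.deriv_eq,
      deriv_const_mul _ ((Real.hasDerivAt_rpow_const
        (Or.inl hgξ.ne' : g ξ ≠ 0 ∨ 1 ≤ α - 1)).differentiableAt),
      Real.deriv_rpow_const (g ξ) (α - 1)]
    ring_nf
  have hbne : α * g ξ ^ (α - 1) ≠ 0 := mul_ne_zero hα (Real.rpow_pos_of_pos hgξ _).ne'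
  have hA : pLaplacian p (fun x => g x ^ α) ξ =
      |α * g ξ ^ (α - 1)| ^ (p - 2) * (α * g ξ ^ (α - 1)) * S +
        (p - 1) * |α * g ξ ^ (α - 1)| ^ (p - 2) * (α * ((α - 1) * g ξ ^ (α - 2))) * K := by
    have := chain_rule hp hΩ hg hξ (hgrad ξ hξ) hhα (by rw [hdα]; exact hbne)
    rw [hdα, hdα'] at this
    exact this
  have hAbs : (0:ℝ) < |α * g ξ ^ (α - 1)| ^ (p - 2) :=
    Real.rpow_pos_of_pos (abs_pos.mpr hbne) _
  have h0 := hharm ξ hξ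
  rw [hA] at h0
  have h2 : |α * g ξ ^ (α - 1)| ^ (p - 2) *
      (α * g ξ ^ (α - 1) * S + (p - 1) * (α * ((α - 1) * g ξ ^ (α - 2))) * K) = 0 := by
    linear_combination h0
  have h1 : α * g ξ ^ (α - 1) * S + (p - 1) * (α * ((α - 1) * g ξ ^ (α - 2))) * K = 0 :=
    (mul_eq_zero.mp h2).resolve_left hAbs.ne'
  have hrw : g ξ ^ (α - 1) = g ξ ^ (α - 2) * g ξ := by
    rw [show α - 1 = α - 2 + 1 by ring, Real.rpow_add_one hgξ.ne']
  have hq : α * g ξ ^ (α - 2) ≠ 0 := mul_ne_zero hα (Real.rpow_pos_of_pos hgξ _).ne'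
  have h3 : g ξ * S + (p - 1) * (α - 1) * K = 0 := by
    apply mul_left_cancel₀ hq
    rw [hrw] at h1
    linear_combination h1
  have hS : S = (p - 1) * ((1 - α) / g ξ) * K := by
    field_simp
    linear_combination h3
  -- step 2: chain rule for v
  have hB : pLaplacian p (fun x => v (g x)) ξ =
      |deriv v (g ξ)| ^ (p - 2) * deriv v (g ξ) * S +
        (p - 1) * |deriv v (g ξ)| ^ (p - 2) * deriv (deriv v) (g ξ) * K :=
    chain_rule hp hΩ hg hξ (hgrad ξ hξ) hv.contDiffAt (hv' ξ hξ)
  rw [hB, hS]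
  ring
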